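/- Let M₁ and M₂ be matroids on disjoint ground sets and let M = M₁ ⊕ M₂ be their direct sum. Then the combinatorial derived matroid of M is the direct sum of the combinatorial derived matroids: δ(M₁ ⊕ M₂) = δ(M₁) ⊕ δ(M₂), where the ground set 𝒞(M) of δM is the disjoint union 𝒞(M₁) ⊔ 𝒞(M₂) and a set is dependent in the direct sum of two matroids iff its intersection with at least one of the two ground sets is dependent in the corresponding matroid. -/

import Mathlib

open Set

namespace DM

variable {α : Type*}

/-- A circuit of a matroid: an inclusion-minimal dependent set. -/
def IsCircuit (M : Matroid α) (C : Set α) : Prop :=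
  M.Dep C ∧ ∀ D, M.Dep D → D ⊆ C → D = C

/-- The collection 𝒞 of circuits of `M`. -/
def circuits (M : Matroid α) : Set (Set α) := {C | IsCircuit M C}

/-- The rank of a set: the maximal cardinality of an independent subset. -/
noncomputable def rk (M : Matroid α) (S : Set α) : ℕ :=
  sSup {m : ℕ | ∃ I, I ⊆ S ∧ M.Indep I ∧ I.ncard = m}

/-- The nullity function n(S) = |S| - r(S). -/
noncomputable def nullity (M : Matroid α) (S : Set α) : ℕ := S.ncard - rk M S

/-- The support of a family of sets. -/
def supp (A : Set (Set α)) : Set α := ⋃₀ A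

/-- The initial collection 𝒜₀ = {A ⊆ 𝒞 : |A| > n(supp A)}. -/
noncomputable def A0 (M : Matroid α) : Set (Set (Set α)) :=
  {A | A ⊆ circuits M ∧ nullity M (supp A) < A.ncard}

/-- The operation ε. -/
def eps (X : Set (Set (Set α))) : Set (Set (Set α)) :=
  X ∪ {B | ∃ A₁ ∈ X, ∃ A₂ ∈ X, A₁ ∩ A₂ ∉ X ∧ ∃ C ∈ A₁ ∩ A₂, B = (A₁ ∪ A₂) \ {C}}

/-- The up-closure ↑X = {A ⊆ 𝒞 : ∃ A' ∈ X, A' ⊆ A} within the ground collection 𝒞. -/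
def up (𝒞 : Set (Set α)) (X : Set (Set (Set α))) : Set (Set (Set α)) :=
  {A | A ⊆ 𝒞 ∧ ∃ A' ∈ X, A' ⊆ A}

/-- The increasing sequence 𝒜ᵢ with 𝒜₍ᵢ₊₁₎ = ↑ε(𝒜ᵢ). -/
noncomputable def Ai (M : Matroid α) : ℕ → Set (Set (Set α))
  | 0 => A0 M
  | (i+1) => up (circuits M) (eps (Ai M i))

/-- 𝒜 = ⋃ᵢ 𝒜ᵢ : the collection of dependent sets of the combinatorial derived matroid δM. -/
noncomputable def derivedDep (M : Matroid α) : Set (Set (Set α)) := ⋃ i, Ai M i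


section Rank

variable {M : Matroid α} {S T X Y I C P Q R : Set α}

lemma rk_bddAbove (hS : S.Finite) :
    BddAbove {m : ℕ | ∃ I, I ⊆ S ∧ M.Indep I ∧ I.ncard = m} :=
  ⟨S.ncard, fun _ ⟨_, hIS, _, hc⟩ => hc ▸ Set.ncard_le_ncard hIS hS⟩

lemma ncard_le_rk (hS : S.Finite) (hI : M.Indep I) (hIS : I ⊆ S) : I.ncard ≤ rk M S :=
  le_csSup (rk_bddAbove hS) ⟨I, hIS, hI, rfl⟩

lemma exists_rk (M : Matroid α) (hS : S.Finite) :
    ∃ I, I ⊆ S ∧ M.Indep I ∧ I.ncard = rk M S := by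
  have h0 : ({m : ℕ | ∃ I, I ⊆ S ∧ M.Indep I ∧ I.ncard = m}).Nonempty :=
    ⟨0, ∅, empty_subset _, M.empty_indep, by simp⟩
  exact Nat.sSup_mem h0 (rk_bddAbove hS)

lemma rk_le_ncard (M : Matroid α) (hS : S.Finite) : rk M S ≤ S.ncard := by
  obtain ⟨I, hIS, _, hc⟩ := exists_rk M hS
  exact hc ▸ Set.ncard_le_ncard hIS hS

lemma rk_le_basis' (hS : S.Finite) (hJ : M.IsBasis' I S) : rk M S ≤ I.ncard := by
  obtain ⟨K, hKS, hK, hc⟩ := exists_rk M hS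
  by_contra hlt
  push_neg at hlt
  have hIfin : I.Finite := hS.subset hJ.subset
  have hKfin : K.Finite := hS.subset hKS
  have hcc : I.encard < K.encard := by
    rw [← hIfin.cast_ncard_eq, ← hKfin.cast_ncard_eq]
    exact_mod_cast lt_of_lt_of_le hlt (le_of_eq hc.symm)
  obtain ⟨e, he, hind⟩ := hJ.indep.augment hK hcc
  exact hJ.insert_not_indep ⟨hKS he.1, he.2⟩ hind

lemma rk_submod (hX : X.Finite) (hY : Y.Finite) :
    rk M (X ∪ Y) + rk M (X ∩ Y) ≤ rk M X + rk M Y := by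
  obtain ⟨I, hIs, hIi, hIc⟩ := exists_rk M (hX.inter_of_left Y)
  obtain ⟨J, hJb, hIJ⟩ := hIi.subset_isBasis'_of_subset
    (hIs.trans (inter_subset_left.trans subset_union_left))
  have hXY : (X ∪ Y).Finite := hX.union hY
  have hJfin : J.Finite := hXY.subset hJb.subset
  have h1 : rk M (X ∪ Y) ≤ J.ncard := rk_le_basis' hXY hJb
  have h2 : (J ∩ X).ncard ≤ rk M X :=
    ncard_le_rk hX (hJb.indep.subset inter_subset_left) inter_subset_right
  have h3 : (J ∩ Y).ncard ≤ rk M Y :=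
    ncard_le_rk hY (hJb.indep.subset inter_subset_left) inter_subset_right
  have h4 : (J ∩ X ∪ J ∩ Y).ncard + (J ∩ X ∩ (J ∩ Y)).ncard = (J ∩ X).ncard + (J ∩ Y).ncard :=
    Set.ncard_union_add_ncard_inter _ _ (hJfin.inter_of_left _) (hJfin.inter_of_left _)
  have h5 : J ∩ X ∪ J ∩ Y = J := by
    rw [← inter_union_distrib_left]
    exact inter_eq_self_of_subset_left hJb.subset
  have h6 : J ∩ X ∩ (J ∩ Y) = J ∩ (X ∩ Y) := by ext x; simp only [mem_inter_iff]; tauto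
  have h7 : rk M (X ∩ Y) ≤ (J ∩ (X ∩ Y)).ncard := by
    rw [← hIc]
    exact Set.ncard_le_ncard (subset_inter hIJ hIs) (hJfin.inter_of_left _)
  rw [h5, h6] at h4
  omega

lemma rk_ge_of_subset (hT : T.Finite) (hST : S ⊆ T) : rk M T ≤ rk M S + (T \ S).ncard := by
  obtain ⟨I, hIT, hIi, hIc⟩ := exists_rk M hT
  have hIfin : I.Finite := hT.subset hIT
  have h1 : (I ∩ S).ncard ≤ rk M S :=
    ncard_le_rk (hT.subset hST) (hIi.subset inter_subset_left) inter_subset_right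
  have h2 : (I \ S).ncard ≤ (T \ S).ncard :=
    Set.ncard_le_ncard (diff_subset_diff_left hIT) hT.diff
  have h3 : (I ∩ S).ncard + (I \ S).ncard = I.ncard := by
    rw [← Set.ncard_union_eq (disjoint_sdiff_right.mono_left inter_subset_right)
      (hIfin.inter_of_left _) hIfin.diff, inter_union_diff]
  omega

lemma nullity_mono (hT : T.Finite) (hST : S ⊆ T) : nullity M S ≤ nullity M T := by
  have h1 := rk_ge_of_subset (M := M) hT hST
  have h2 : S.ncard + (T \ S).ncard = T.ncard := by
    rw [← Set.ncard_union_eq disjoint_sdiff_right (hT.subset hST) hT.diff,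
      union_diff_cancel hST]
  have h3 := rk_le_ncard M (hT.subset hST)
  unfold nullity
  omega

lemma IsCircuit.nonempty {C : Set α} (hC : IsCircuit M C) : C.Nonempty := by
  rw [nonempty_iff_ne_empty]
  rintro rfl
  exact hC.1.not_indep M.empty_indep

lemma supp_subset_ground {A : Set (Set α)} (hA : A ⊆ circuits M) : supp A ⊆ M.E := by
  rintro x ⟨C, hCA, hxC⟩
  exact (hA hCA).1.subset_ground hxC

lemma supp_mono {A B : Set (Set α)} (hAB : A ⊆ B) : supp A ⊆ supp B :=
  sUnion_mono hAB

lemma circuits_finite (hE : M.E.Finite) : (circuits M).Finite :=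
  hE.finite_subsets.subset fun _ hC => hC.1.subset_ground

lemma exists_circuit_aux (n : ℕ) :
    ∀ D : Set α, D.Finite → D.ncard ≤ n → M.Dep D → ∃ c, c ⊆ D ∧ IsCircuit M c := by
  induction n with
  | zero =>
    intro D hfin hcard hD
    have : D = ∅ := (Set.ncard_eq_zero hfin).1 (Nat.le_zero.1 hcard)
    exact absurd M.empty_indep (this ▸ hD).not_indep
  | succ n ih =>
    intro D hfin hcard hD
    by_cases hmin : ∀ D', M.Dep D' → D' ⊆ D → D' = D
    · exact ⟨D, Subset.rfl, hD, hmin⟩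
    · push_neg at hmin
      obtain ⟨D', hD', hsub, hne⟩ := hmin
      have hcard' : D'.ncard ≤ n := by
        have := Set.ncard_lt_ncard (hsub.ssubset_of_ne hne) hfin
        omega
      obtain ⟨c, hc1, hc2⟩ := ih D' (hfin.subset hsub) hcard' hD'
      exact ⟨c, hc1.trans hsub, hc2⟩

lemma exists_circuit (hfin : S.Finite) (hD : M.Dep S) : ∃ c, c ⊆ S ∧ IsCircuit M c :=
  exists_circuit_aux S.ncard S hfin le_rfl hD

/-- If every circuit inside `R` belongs to `W`, then the nullity of `R` is at most `|W|`. -/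
lemma nullity_le_of_circuits_subset (hE : M.E.Finite) (hR : R ⊆ M.E)
    {W : Set (Set α)} (hWfin : W.Finite)
    (hall : ∀ c, c ⊆ R → IsCircuit M c → c ∈ W) : nullity M R ≤ W.ncard := by
  have hRfin : R.Finite := hE.subset hR
  obtain ⟨J, hJ, -⟩ := M.empty_indep.subset_isBasis'_of_subset (empty_subset R)
  have hJR : J ⊆ R := hJ.subset
  have hJcard : J.ncard = rk M R :=
    le_antisymm (ncard_le_rk hRfin hJ.indep hJR) (rk_le_basis' hRfin hJ)
  have hkey : ∀ f : α, ∃ c : Set α,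
      f ∈ R \ J → c ⊆ insert f J ∧ IsCircuit M c ∧ f ∈ c := by
    intro f
    by_cases hf : f ∈ R \ J
    · have hdep : M.Dep (insert f J) :=
        ⟨hJ.insert_not_indep ⟨hf.1, hf.2⟩, insert_subset (hR hf.1) (hJR.trans hR)⟩
      have hifin : (insert f J).Finite := hRfin.subset (insert_subset hf.1 hJR)
      obtain ⟨c, hcsub, hc⟩ := exists_circuit hifin hdep
      refine ⟨c, fun _ => ⟨hcsub, hc, ?_⟩⟩
      by_contra hfc
      have hcJ : c ⊆ J := fun x hx => ((hcsub hx).elim (fun he => absurd (he ▸ hx) hfc) id)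
      exact hc.1.not_indep (hJ.indep.subset hcJ)
    · exact ⟨∅, fun hf' => absurd hf' hf⟩
  choose φ hφ using hkey
  have hmaps : ∀ f ∈ R \ J, φ f ∈ W := by
    intro f hf
    obtain ⟨h1, h2, _⟩ := hφ f hf
    exact hall _ (h1.trans (insert_subset hf.1 hJR)) h2
  have hinj : Set.InjOn φ (R \ J) := by
    intro f hf f' hf' heq
    obtain ⟨-, -, h3⟩ := hφ f hf
    obtain ⟨h1', -, -⟩ := hφ f' hf'
    have : f ∈ insert f' J := h1' (heq ▸ h3)
    exact this.elim id (fun hJf => absurd hJf hf.2)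
  have hle : (R \ J).ncard ≤ W.ncard := Set.ncard_le_ncard_of_injOn φ hmaps hinj hWfin
  have hdiff : (R \ J).ncard = R.ncard - J.ncard := Set.ncard_diff hJR (hRfin.subset hJR)
  have h3 := rk_le_ncard M hRfin
  unfold nullity
  omega

end Rank

section Psi

variable {M : Matroid α} {S S₁ S₂ c : Set α}

lemma finite_family (hE : M.E.Finite) {A : Set (Set α)} (hA : A ⊆ circuits M) : A.Finite :=
  (circuits_finite hE).subset hA

lemma insert_mem_A0 (hE : M.E.Finite) {S : Set (Set α)} {c : Set α}
    (hS : S ⊆ circuits M) (hc : IsCircuit M c) (hcsupp : c ⊆ supp S) (hcS : c ∉ S)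
    (hσ : nullity M (supp S) ≤ S.ncard) : insert c S ∈ A0 M := by
  have hfin : S.Finite := finite_family hE hS
  have hsupp : supp (insert c S) = supp S := by
    show ⋃₀ insert c S = ⋃₀ S
    rw [sUnion_insert]
    exact union_eq_self_of_subset_left hcsupp
  refine ⟨insert_subset hc hS, ?_⟩
  rw [hsupp, Set.ncard_insert_of_notMem hcS hfin]
  omega

/-- The key dichotomy lemma: two families of surplus ≥ 0 whose intersection is
deficient have a dependent union (at level 1). -/
lemma psi (hE : M.E.Finite) {S₁ S₂ : Set (Set α)}
    (h₁ : S₁ ⊆ circuits M) (h₂ : S₂ ⊆ circuits M)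
    (hσ₁ : nullity M (supp S₁) ≤ S₁.ncard) (hσ₂ : nullity M (supp S₂) ≤ S₂.ncard)
    (hdef : (S₁ ∩ S₂).ncard + 1 ≤ nullity M (supp (S₁ ∩ S₂))) :
    ∃ V ∈ eps (A0 M), V ⊆ S₁ ∪ S₂ := by
  set R := supp (S₁ ∩ S₂) with hRdef
  have hRE : R ⊆ M.E := supp_subset_ground (inter_subset_left.trans h₁)
  have hRS₁ : R ⊆ supp S₁ := supp_mono inter_subset_left
  have hRS₂ : R ⊆ supp S₂ := supp_mono inter_subset_right
  by_cases hcase : ∃ c, c ⊆ R ∧ IsCircuit M c ∧ c ∉ S₁ ∪ S₂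
  · obtain ⟨c, hcR, hc, hcS⟩ := hcase
    have hc₁ : c ∉ S₁ := fun hx => hcS (Or.inl hx)
    have hc₂ : c ∉ S₂ := fun hx => hcS (Or.inr hx)
    have hP : insert c S₁ ∈ A0 M :=
      insert_mem_A0 hE h₁ hc (hcR.trans hRS₁) hc₁ hσ₁
    have hQ : insert c S₂ ∈ A0 M :=
      insert_mem_A0 hE h₂ hc (hcR.trans hRS₂) hc₂ hσ₂
    have hinter : insert c S₁ ∩ insert c S₂ = insert c (S₁ ∩ S₂) := by
      ext x; simp only [mem_inter_iff, mem_insert_iff]; tauto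
    have hnot : insert c S₁ ∩ insert c S₂ ∉ A0 M := by
      rw [hinter]
      rintro ⟨-, hlt⟩
      have hsupp : supp (insert c (S₁ ∩ S₂)) = R := by
        show ⋃₀ insert c (S₁ ∩ S₂) = R
        rw [sUnion_insert]
        exact union_eq_self_of_subset_left hcR
      have hcmem : c ∉ S₁ ∩ S₂ := fun hx => hc₁ hx.1
      rw [hsupp, Set.ncard_insert_of_notMem hcmem
        (finite_family hE (inter_subset_left.trans h₁))] at hlt
      omega
    refine ⟨(insert c S₁ ∪ insert c S₂) \ {c}, Or.inr ?_, ?_⟩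
    · exact ⟨_, hP, _, hQ, hnot, c, by rw [hinter]; exact mem_insert _ _, rfl⟩
    · intro x hx
      have : x ∈ insert c (S₁ ∪ S₂) := by
        rcases hx.1 with hx' | hx'
        · rcases hx' with h | h
          · exact Or.inl h
          · exact Or.inr (Or.inl h)
        · rcases hx' with h | h
          · exact Or.inl h
          · exact Or.inr (Or.inr h)
      exact this.elim (fun he => absurd he hx.2) id
  · push_neg at hcase
    set W := {T | T ∈ S₁ ∪ S₂ ∧ T ⊆ R} with hWdef
    have hWfin : W.Finite := (finite_family hE (union_subset h₁ h₂)).subset fun _ ht => ht.1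
    have hWR : nullity M R ≤ W.ncard :=
      nullity_le_of_circuits_subset hE hRE hWfin
        (fun c hcR hc => ⟨hcase c hcR hc, hcR⟩)
    have hsubW : S₁ ∩ S₂ ⊆ W := by
      intro T hT
      exact ⟨Or.inl hT.1, subset_sUnion_of_mem hT⟩
    have hlt : (S₁ ∩ S₂).ncard < W.ncard := by omega
    obtain ⟨T, hTW, hTnot⟩ := Set.exists_mem_notMem_of_ncard_lt_ncard hlt
      (finite_family hE (inter_subset_left.trans h₁))
    rcases hTW.1 with hT₁ | hT₂
    · have hT2 : T ∉ S₂ := fun hx => hTnot ⟨hT₁, hx⟩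
      refine ⟨insert T S₂, Or.inl ?_, ?_⟩
      · exact insert_mem_A0 hE h₂ (h₁ hT₁) (hTW.2.trans hRS₂) hT2 hσ₂
      · exact insert_subset (Or.inl hT₁) subset_union_right
    · have hT1 : T ∉ S₁ := fun hx => hTnot ⟨hx, hT₂⟩
      refine ⟨insert T S₁, Or.inl ?_, ?_⟩
      · exact insert_mem_A0 hE h₁ (h₂ hT₂) (hTW.2.trans hRS₁) hT1 hσ₁
      · exact insert_subset (Or.inr hT₂) subset_union_left

end Psi

section AiLemmas

variable {M : Matroid α} {A B : Set (Set α)} {i : ℕ}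

lemma A0_subset_circuits (hA : A ∈ A0 M) : A ⊆ circuits M := hA.1

lemma Ai_subset_circuits (hA : A ∈ Ai M i) : A ⊆ circuits M := by
  cases i with
  | zero => exact hA.1
  | succ i => exact hA.1

lemma Ai_mono (hA : A ∈ Ai M i) : A ∈ Ai M (i + 1) :=
  ⟨Ai_subset_circuits hA, A, Or.inl hA, Subset.rfl⟩

lemma Ai_up_closed (hA : A ∈ Ai M (i + 1)) (hAB : A ⊆ B) (hB : B ⊆ circuits M) :
    B ∈ Ai M (i + 1) := by
  obtain ⟨-, A', hA', hsub⟩ := hA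
  exact ⟨hB, A', hA', hsub.trans hAB⟩

lemma mem_Ai_succ_of_mem (hA : A ∈ Ai M i) (hAB : A ⊆ B) (hB : B ⊆ circuits M) :
    B ∈ Ai M (i + 1) :=
  ⟨hB, A, Or.inl hA, hAB⟩

lemma mem_Ai_succ_of_eps {V : Set (Set α)} (hV : V ∈ eps (Ai M i)) (hVB : V ⊆ B)
    (hB : B ⊆ circuits M) : B ∈ Ai M (i + 1) :=
  ⟨hB, V, hV, hVB⟩

lemma mem_Ai_one_of_eps_A0 {V B : Set (Set α)} (hV : V ∈ eps (A0 M)) (hVB : V ⊆ B)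
    (hB : B ⊆ circuits M) : B ∈ Ai M 1 :=
  ⟨hB, V, hV, hVB⟩

end AiLemmas

section Sum

variable {M₁ M₂ : Matroid α} {h : Disjoint M₁.E M₂.E} {S C : Set α}

lemma dep_disjointSum_iff {D : Set α} :
    (M₁.disjointSum M₂ h).Dep D ↔
      D ⊆ M₁.E ∪ M₂.E ∧ (M₁.Dep (D ∩ M₁.E) ∨ M₂.Dep (D ∩ M₂.E)) := by
  constructor
  · rintro ⟨hni, hsub⟩
    rw [Matroid.disjointSum_ground_eq] at hsub
    refine ⟨hsub, ?_⟩
    by_contra hcon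
    push_neg at hcon
    have i1 : M₁.Indep (D ∩ M₁.E) := M₁.indep_of_not_dep hcon.1 inter_subset_right
    have i2 : M₂.Indep (D ∩ M₂.E) := M₂.indep_of_not_dep hcon.2 inter_subset_right
    exact hni (Matroid.disjointSum_indep_iff.2 ⟨i1, i2, hsub⟩)
  · rintro ⟨hsub, hor⟩
    refine ⟨fun hi => ?_, by rwa [Matroid.disjointSum_ground_eq]⟩
    rw [Matroid.disjointSum_indep_iff] at hi
    rcases hor with hd | hd
    · exact hd.not_indep hi.1
    · exact hd.not_indep hi.2.1

lemma circuit_sum_left (hC : IsCircuit M₁ C) : IsCircuit (M₁.disjointSum M₂ h) C := by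
  have hCE : C ⊆ M₁.E := hC.1.subset_ground
  constructor
  · rw [dep_disjointSum_iff]
    exact ⟨hCE.trans subset_union_left,
      Or.inl (by rw [inter_eq_self_of_subset_left hCE]; exact hC.1)⟩
  · intro D hD hDC
    rw [dep_disjointSum_iff] at hD
    have hDE : D ⊆ M₁.E := hDC.trans hCE
    rcases hD.2 with hd | hd
    · rw [inter_eq_self_of_subset_left hDE] at hd
      exact hC.2 D hd hDC
    · rw [(h.mono_left hDE).inter_eq] at hd
      exact absurd M₂.empty_indep hd.not_indep

lemma circuit_sum_right (hC : IsCircuit M₂ C) : IsCircuit (M₁.disjointSum M₂ h) C := by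
  have hCE : C ⊆ M₂.E := hC.1.subset_ground
  constructor
  · rw [dep_disjointSum_iff]
    exact ⟨hCE.trans subset_union_right,
      Or.inr (by rw [inter_eq_self_of_subset_left hCE]; exact hC.1)⟩
  · intro D hD hDC
    rw [dep_disjointSum_iff] at hD
    have hDE : D ⊆ M₂.E := hDC.trans hCE
    rcases hD.2 with hd | hd
    · rw [(h.symm.mono_left hDE).inter_eq] at hd
      exact absurd M₁.empty_indep hd.not_indep
    · rw [inter_eq_self_of_subset_left hDE] at hd
      exact hC.2 D hd hDC

lemma circuits_disjointSum :
    circuits (M₁.disjointSum M₂ h) = circuits M₁ ∪ circuits M₂ := by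
  ext C
  constructor
  · intro hC
    have hdep := hC.1
    rw [dep_disjointSum_iff] at hdep
    rcases hdep.2 with hd | hd
    · left
      have hdepsum : (M₁.disjointSum M₂ h).Dep (C ∩ M₁.E) := by
        rw [dep_disjointSum_iff]
        refine ⟨inter_subset_right.trans subset_union_left, Or.inl ?_⟩
        rwa [inter_assoc, inter_self]
      have heq : C ∩ M₁.E = C := hC.2 _ hdepsum inter_subset_left
      have hCE : C ⊆ M₁.E := by rw [← heq]; exact inter_subset_right
      refine ⟨by rwa [heq] at hd, ?_⟩
      intro D hDdep hDC
      have hDE : D ⊆ M₁.E := hDC.trans hCE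
      refine hC.2 D ?_ hDC
      rw [dep_disjointSum_iff]
      exact ⟨hDE.trans subset_union_left,
        Or.inl (by rwa [inter_eq_self_of_subset_left hDE])⟩
    · right
      have hdepsum : (M₁.disjointSum M₂ h).Dep (C ∩ M₂.E) := by
        rw [dep_disjointSum_iff]
        refine ⟨inter_subset_right.trans subset_union_right, Or.inr ?_⟩
        rwa [inter_assoc, inter_self]
      have heq : C ∩ M₂.E = C := hC.2 _ hdepsum inter_subset_left
      have hCE : C ⊆ M₂.E := by rw [← heq]; exact inter_subset_right
      refine ⟨by rwa [heq] at hd, ?_⟩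
      intro D hDdep hDC
      have hDE : D ⊆ M₂.E := hDC.trans hCE
      refine hC.2 D ?_ hDC
      rw [dep_disjointSum_iff]
      exact ⟨hDE.trans subset_union_right,
        Or.inr (by rwa [inter_eq_self_of_subset_left hDE])⟩
  · rintro (hC | hC)
    exacts [circuit_sum_left hC, circuit_sum_right hC]

lemma circuits_not_both (h : Disjoint M₁.E M₂.E) (hC₁ : C ∈ circuits M₁) (hC₂ : C ∈ circuits M₂) : False := by
  obtain ⟨e, he⟩ := hC₁.nonempty
  exact Set.disjoint_left.1 h (hC₁.1.subset_ground he) (hC₂.1.subset_ground he)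

lemma rk_disjointSum (hS : S ⊆ M₁.E ∪ M₂.E) (hfin : S.Finite) :
    rk (M₁.disjointSum M₂ h) S = rk M₁ (S ∩ M₁.E) + rk M₂ (S ∩ M₂.E) := by
  apply le_antisymm
  · obtain ⟨I, hIS, hIi, hIc⟩ := exists_rk (M₁.disjointSum M₂ h) hfin
    rw [Matroid.disjointSum_indep_iff] at hIi
    obtain ⟨i1, i2, hIsub⟩ := hIi
    have hIfin : I.Finite := hfin.subset hIS
    have h1 : (I ∩ M₁.E).ncard ≤ rk M₁ (S ∩ M₁.E) :=
      ncard_le_rk (hfin.inter_of_left _) i1 (inter_subset_inter_left _ hIS)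
    have h2 : (I ∩ M₂.E).ncard ≤ rk M₂ (S ∩ M₂.E) :=
      ncard_le_rk (hfin.inter_of_left _) i2 (inter_subset_inter_left _ hIS)
    have hsplit : I.ncard = (I ∩ M₁.E).ncard + (I ∩ M₂.E).ncard := by
      rw [← Set.ncard_union_eq (h.mono inter_subset_right inter_subset_right)
        (hIfin.inter_of_left _) (hIfin.inter_of_left _), ← inter_union_distrib_left,
        inter_eq_self_of_subset_left hIsub]
    omega
  · obtain ⟨I₁, hI₁S, hI₁, hc₁⟩ := exists_rk M₁ (hfin.inter_of_left M₁.E)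
    obtain ⟨I₂, hI₂S, hI₂, hc₂⟩ := exists_rk M₂ (hfin.inter_of_left M₂.E)
    have hI₁E : I₁ ⊆ M₁.E := hI₁.subset_ground
    have hI₂E : I₂ ⊆ M₂.E := hI₂.subset_ground
    have hdisj : Disjoint I₁ I₂ := h.mono hI₁E hI₂E
    have hIS : I₁ ∪ I₂ ⊆ S :=
      union_subset (hI₁S.trans inter_subset_left) (hI₂S.trans inter_subset_left)
    have hind : (M₁.disjointSum M₂ h).Indep (I₁ ∪ I₂) := by
      rw [Matroid.disjointSum_indep_iff]
      have e1 : (I₁ ∪ I₂) ∩ M₁.E = I₁ := by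
        rw [union_inter_distrib_right, inter_eq_self_of_subset_left hI₁E,
          (h.symm.mono_left hI₂E).inter_eq, union_empty]
      have e2 : (I₁ ∪ I₂) ∩ M₂.E = I₂ := by
        rw [union_inter_distrib_right, inter_eq_self_of_subset_left hI₂E,
          (h.mono_left hI₁E).inter_eq, empty_union]
      rw [e1, e2]
      exact ⟨hI₁, hI₂, union_subset (hI₁E.trans subset_union_left)
        (hI₂E.trans subset_union_right)⟩
    have hle := ncard_le_rk hfin hind hIS
    rw [Set.ncard_union_eq hdisj (hfin.subset (hI₁S.trans inter_subset_left))
      (hfin.subset (hI₂S.trans inter_subset_left))] at hle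
    omega

lemma nullity_empty (M : Matroid α) : nullity M ∅ = 0 := by simp [nullity]

lemma nullity_disjointSum (hS : S ⊆ M₁.E ∪ M₂.E) (hfin : S.Finite) :
    nullity (M₁.disjointSum M₂ h) S = nullity M₁ (S ∩ M₁.E) + nullity M₂ (S ∩ M₂.E) := by
  have hr := rk_disjointSum (h := h) hS hfin
  have h1 := rk_le_ncard M₁ (hfin.inter_of_left M₁.E)
  have h2 := rk_le_ncard M₂ (hfin.inter_of_left M₂.E)
  have hsplit : S.ncard = (S ∩ M₁.E).ncard + (S ∩ M₂.E).ncard := by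
    rw [← Set.ncard_union_eq (h.mono inter_subset_right inter_subset_right)
      (hfin.inter_of_left _) (hfin.inter_of_left _), ← inter_union_distrib_left,
      inter_eq_self_of_subset_left hS]
  unfold nullity
  omega

lemma nullity_restrict_left (hS : S ⊆ M₁.E) (hfin : S.Finite) :
    nullity (M₁.disjointSum M₂ h) S = nullity M₁ S := by
  rw [nullity_disjointSum (hS.trans subset_union_left) hfin,
    inter_eq_self_of_subset_left hS, (h.mono_left hS).inter_eq, nullity_empty]
  omega

lemma nullity_restrict_right (hS : S ⊆ M₂.E) (hfin : S.Finite) :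
    nullity (M₁.disjointSum M₂ h) S = nullity M₂ S := by
  rw [nullity_disjointSum (hS.trans subset_union_right) hfin,
    inter_eq_self_of_subset_left hS, (h.symm.mono_left hS).inter_eq, nullity_empty]
  omega

end Sum

section Helpers

variable {M : Matroid α}

lemma nullity_circuit_pos (hE : M.E.Finite) {C : Set α} (hC : IsCircuit M C) :
    1 ≤ nullity M C := by
  have hfin : C.Finite := hE.subset hC.1.subset_ground
  have hlt : rk M C < C.ncard := by
    rcases lt_or_eq_of_le (rk_le_ncard M hfin) with hlt | heq
    · exact hlt
    · obtain ⟨I, hIC, hIi, hIc⟩ := exists_rk M hfin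
      have : I = C := Set.eq_of_subset_of_ncard_le hIC (by omega) hfin
      exact absurd (this ▸ hIi) hC.1.not_indep
  unfold nullity
  omega

lemma Ai_not_subset_singleton (hE : M.E.Finite) :
    ∀ (i : ℕ) (A : Set (Set α)) (c : Set α), A ∈ Ai M i → A ⊆ {c} → False := by
  intro i
  induction i with
  | zero =>
    intro A c hA hsub
    obtain ⟨hAc, hcount⟩ := hA
    have hle : A.ncard ≤ 1 := by
      have := Set.ncard_le_ncard hsub (finite_singleton c)
      simpa using this
    rcases eq_empty_or_nonempty A with rfl | hne
    · simp [supp] at hcount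
    · have hAeq : A = {c} := hne.subset_singleton_iff.1 hsub
      subst hAeq
      have hcirc : IsCircuit M c := hAc rfl
      have hsupp : supp {c} = c := sUnion_singleton c
      have h1 := nullity_circuit_pos hE hcirc
      rw [hsupp] at hcount
      simp only [Set.ncard_singleton] at hcount
      omega
  | succ i ih =>
    intro A c hA hsub
    obtain ⟨-, V, hV, hVA⟩ := hA
    rcases hV with hV | ⟨B₁, hB₁, B₂, hB₂, hnot, c', hc', heq⟩
    · exact ih V c hV (hVA.trans hsub)
    · have hVsub : V ⊆ {c} := hVA.trans hsub
      have hBsub : B₁ ∪ B₂ ⊆ {c, c'} := by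
        intro T hT
        by_cases hTc : T = c'
        · exact Or.inr hTc
        · have : T ∈ V := heq ▸ ⟨hT, fun hmem => hTc (mem_singleton_iff.1 hmem)⟩
          exact Or.inl (mem_singleton_iff.1 (hVsub this))
      by_cases hBB : B₁ ⊆ B₂
      · exact hnot (by rwa [inter_eq_self_of_subset_left hBB])
      · obtain ⟨x, hxB₁, hxB₂⟩ := not_subset.1 hBB
        have hxc : x = c := by
          rcases hBsub (Or.inl hxB₁) with h1 | h1
          · exact h1
          · exact absurd (h1 ▸ hxB₁ : c' ∈ B₁) (fun hh => hxB₂ (h1 ▸ hc'.2 : x ∈ B₂))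
        have hB₂sub : B₂ ⊆ {c'} := by
          intro y hy
          rcases hBsub (Or.inr hy) with h1 | h1
          · exact absurd (h1 ▸ hy : c ∈ B₂) (hxc ▸ hxB₂)
          · exact h1
        exact ih B₂ c' hB₂ hB₂sub

end Helpers

section Families

variable {M₁ M₂ : Matroid α} {h : Disjoint M₁.E M₂.E}

lemma supp_inter_left {A : Set (Set α)} (hA : A ⊆ circuits (M₁.disjointSum M₂ h)) :
    supp A ∩ M₁.E = supp (A ∩ circuits M₁) := by
  ext x
  simp only [supp, mem_inter_iff, mem_sUnion]
  constructor
  · rintro ⟨⟨C, hCA, hxC⟩, hxE⟩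
    have hC := hA hCA
    rw [circuits_disjointSum] at hC
    rcases hC with hC | hC
    · exact ⟨C, ⟨hCA, hC⟩, hxC⟩
    · exact absurd (hC.1.subset_ground hxC) (Set.disjoint_left.1 h.symm · hxE)
  · rintro ⟨C, ⟨hCA, hC⟩, hxC⟩
    exact ⟨⟨C, hCA, hxC⟩, hC.1.subset_ground hxC⟩

lemma supp_inter_right {A : Set (Set α)} (hA : A ⊆ circuits (M₁.disjointSum M₂ h)) :
    supp A ∩ M₂.E = supp (A ∩ circuits M₂) := by
  ext x
  simp only [supp, mem_inter_iff, mem_sUnion]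
  constructor
  · rintro ⟨⟨C, hCA, hxC⟩, hxE⟩
    have hC := hA hCA
    rw [circuits_disjointSum] at hC
    rcases hC with hC | hC
    · exact absurd (hC.1.subset_ground hxC) (Set.disjoint_left.1 h · hxE)
    · exact ⟨C, ⟨hCA, hC⟩, hxC⟩
  · rintro ⟨C, ⟨hCA, hC⟩, hxC⟩
    exact ⟨⟨C, hCA, hxC⟩, hC.1.subset_ground hxC⟩

lemma sum_ground_finite (hE₁ : M₁.E.Finite) (hE₂ : M₂.E.Finite) :
    (M₁.disjointSum M₂ h).E.Finite := by
  rw [Matroid.disjointSum_ground_eq]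
  exact hE₁.union hE₂

lemma family_split (hE₁ : M₁.E.Finite) (hE₂ : M₂.E.Finite) {A : Set (Set α)}
    (hA : A ⊆ circuits (M₁.disjointSum M₂ h)) :
    nullity (M₁.disjointSum M₂ h) (supp A)
      = nullity M₁ (supp (A ∩ circuits M₁)) + nullity M₂ (supp (A ∩ circuits M₂)) ∧
    A.ncard = (A ∩ circuits M₁).ncard + (A ∩ circuits M₂).ncard := by
  have hsuppE : supp A ⊆ M₁.E ∪ M₂.E := by
    have := supp_subset_ground hA
    rwa [Matroid.disjointSum_ground_eq] at this
  have hsfin : (supp A).Finite := (hE₁.union hE₂).subset hsuppE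
  constructor
  · rw [nullity_disjointSum hsuppE hsfin, supp_inter_left hA, supp_inter_right hA]
  · have hAfin : A.Finite := finite_family (sum_ground_finite hE₁ hE₂) hA
    have hAeq : A = (A ∩ circuits M₁) ∪ (A ∩ circuits M₂) := by
      rw [← inter_union_distrib_left, ← circuits_disjointSum (h := h),
        inter_eq_self_of_subset_left hA]
    have hdisj : Disjoint (A ∩ circuits M₁) (A ∩ circuits M₂) :=
      Set.disjoint_left.2 fun T hT₁ hT₂ => circuits_not_both h hT₁.2 hT₂.2
    conv_lhs => rw [hAeq]
    exact Set.ncard_union_eq hdisj (hAfin.inter_of_left _) (hAfin.inter_of_left _)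

lemma A0_sum_components (hE₁ : M₁.E.Finite) (hE₂ : M₂.E.Finite) {A : Set (Set α)}
    (hA : A ∈ A0 (M₁.disjointSum M₂ h)) :
    A ∩ circuits M₁ ∈ A0 M₁ ∨ A ∩ circuits M₂ ∈ A0 M₂ := by
  obtain ⟨hAc, hcount⟩ := hA
  obtain ⟨hn, hc⟩ := family_split hE₁ hE₂ hAc
  by_contra hcon
  push_neg at hcon
  have h1 : (A ∩ circuits M₁).ncard ≤ nullity M₁ (supp (A ∩ circuits M₁)) := by
    by_contra hlt
    push_neg at hlt
    exact hcon.1 ⟨inter_subset_right, hlt⟩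
  have h2 : (A ∩ circuits M₂).ncard ≤ nullity M₂ (supp (A ∩ circuits M₂)) := by
    by_contra hlt
    push_neg at hlt
    exact hcon.2 ⟨inter_subset_right, hlt⟩
  omega

lemma A0_restrict_left (hE₁ : M₁.E.Finite) {B : Set (Set α)} (hB : B ⊆ circuits M₁) :
    B ∈ A0 (M₁.disjointSum M₂ h) ↔ B ∈ A0 M₁ := by
  have hsupp : supp B ⊆ M₁.E := supp_subset_ground hB
  have hfin : (supp B).Finite := hE₁.subset hsupp
  have hnull := nullity_restrict_left (h := h) (M₂ := M₂) hsupp hfin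
  constructor
  · rintro ⟨-, hcount⟩
    exact ⟨hB, by rwa [hnull] at hcount⟩
  · rintro ⟨-, hcount⟩
    refine ⟨?_, by rwa [hnull]⟩
    rw [circuits_disjointSum]
    exact hB.trans subset_union_left

lemma A0_restrict_right (hE₂ : M₂.E.Finite) {B : Set (Set α)} (hB : B ⊆ circuits M₂) :
    B ∈ A0 (M₁.disjointSum M₂ h) ↔ B ∈ A0 M₂ := by
  have hsupp : supp B ⊆ M₂.E := supp_subset_ground hB
  have hfin : (supp B).Finite := hE₂.subset hsupp
  have hnull := nullity_restrict_right (h := h) (M₁ := M₁) hsupp hfin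
  constructor
  · rintro ⟨-, hcount⟩
    exact ⟨hB, by rwa [hnull] at hcount⟩
  · rintro ⟨-, hcount⟩
    refine ⟨?_, by rwa [hnull]⟩
    rw [circuits_disjointSum]
    exact hB.trans subset_union_right

end Families

section Main

variable {M₁ M₂ : Matroid α} {h : Disjoint M₁.E M₂.E}

lemma main_induction (hE₁ : M₁.E.Finite) (hE₂ : M₂.E.Finite) : ∀ i : ℕ,
    (∀ A ∈ Ai (M₁.disjointSum M₂ h) i,
        A ∩ circuits M₁ ∈ Ai M₁ i ∨ A ∩ circuits M₂ ∈ Ai M₂ i) ∧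
    (∀ B, B ⊆ circuits M₁ →
        ((B ∈ Ai M₁ i → B ∈ Ai (M₁.disjointSum M₂ h) i) ∧
         (B ∈ Ai (M₁.disjointSum M₂ h) i → B ∈ Ai M₁ i))) ∧
    (∀ B, B ⊆ circuits M₂ →
        ((B ∈ Ai M₂ i → B ∈ Ai (M₁.disjointSum M₂ h) i) ∧
         (B ∈ Ai (M₁.disjointSum M₂ h) i → B ∈ Ai M₂ i))) := by
  intro i
  induction i with
  | zero =>
    refine ⟨fun A hA => A0_sum_components hE₁ hE₂ hA, ?_, ?_⟩
    · exact fun B hB => ⟨fun hmem => (A0_restrict_left hE₁ hB).2 hmem,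
        fun hmem => (A0_restrict_left hE₁ hB).1 hmem⟩
    · exact fun B hB => ⟨fun hmem => (A0_restrict_right hE₂ hB).2 hmem,
        fun hmem => (A0_restrict_right hE₂ hB).1 hmem⟩
  | succ i ih =>
    obtain ⟨ih1, ih2, ih3⟩ := ih
    have P2L : ∀ B, B ⊆ circuits M₁ →
        ((B ∈ Ai M₁ (i+1) → B ∈ Ai (M₁.disjointSum M₂ h) (i+1)) ∧
         (B ∈ Ai (M₁.disjointSum M₂ h) (i+1) → B ∈ Ai M₁ (i+1))) := by
      intro B hBc
      have hB𝒞 : B ⊆ circuits (M₁.disjointSum M₂ h) := by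
        rw [circuits_disjointSum]; exact hBc.trans subset_union_left
      constructor
      · rintro ⟨-, V, hV, hVB⟩
        rcases hV with hV | ⟨X, hX, Y, hY, hnot, c, hc, rfl⟩
        · exact mem_Ai_succ_of_mem ((ih2 V (Ai_subset_circuits hV)).1 hV) hVB hB𝒞
        · have hXc := Ai_subset_circuits hX
          have hYc := Ai_subset_circuits hY
          have hX' := (ih2 X hXc).1 hX
          have hY' := (ih2 Y hYc).1 hY
          have hnot' : X ∩ Y ∉ Ai (M₁.disjointSum M₂ h) i := fun hmem =>
            hnot ((ih2 (X ∩ Y) (inter_subset_left.trans hXc)).2 hmem)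
          exact mem_Ai_succ_of_eps (Or.inr ⟨X, hX', Y, hY', hnot', c, hc, rfl⟩) hVB hB𝒞
      · rintro ⟨-, V, hV, hVB⟩
        rcases hV with hV | ⟨B₁, hB₁, B₂, hB₂, hnot, c, hc, rfl⟩
        · exact mem_Ai_succ_of_mem ((ih2 V (hVB.trans hBc)).2 hV) hVB hBc
        · by_cases hc1 : c ∈ circuits M₁
          · have hunion : B₁ ∪ B₂ ⊆ circuits M₁ := by
              intro T hT
              by_cases hTc : T = c
              · exact hTc ▸ hc1
              · exact (hVB.trans hBc) ⟨hT, fun hmem => hTc (mem_singleton_iff.1 hmem)⟩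
            have hB₁' := (ih2 B₁ (subset_union_left.trans hunion)).2 hB₁
            have hB₂' := (ih2 B₂ (subset_union_right.trans hunion)).2 hB₂
            have hnot' : B₁ ∩ B₂ ∉ Ai M₁ i := fun hmem =>
              hnot ((ih2 (B₁ ∩ B₂)
                (inter_subset_left.trans (subset_union_left.trans hunion))).1 hmem)
            exact ⟨hBc, _, Or.inr ⟨B₁, hB₁', B₂, hB₂', hnot', c, hc, rfl⟩, hVB⟩
          · rcases ih1 B₁ hB₁ with hcomp | hcomp
            · refine mem_Ai_succ_of_mem hcomp ?_ hBc
              intro T hT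
              exact hVB ⟨Or.inl hT.1, fun hmem => hc1 (mem_singleton_iff.1 hmem ▸ hT.2)⟩
            · exfalso
              refine Ai_not_subset_singleton hE₂ i (B₁ ∩ circuits M₂) c hcomp ?_
              intro T hT
              by_contra hTc
              have hTV : T ∈ (B₁ ∪ B₂) \ {c} := ⟨Or.inl hT.1, hTc⟩
              exact circuits_not_both h (hVB.trans hBc hTV) hT.2
    have P2R : ∀ B, B ⊆ circuits M₂ →
        ((B ∈ Ai M₂ (i+1) → B ∈ Ai (M₁.disjointSum M₂ h) (i+1)) ∧
         (B ∈ Ai (M₁.disjointSum M₂ h) (i+1) → B ∈ Ai M₂ (i+1))) := by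
      intro B hBc
      have hB𝒞 : B ⊆ circuits (M₁.disjointSum M₂ h) := by
        rw [circuits_disjointSum]; exact hBc.trans subset_union_right
      constructor
      · rintro ⟨-, V, hV, hVB⟩
        rcases hV with hV | ⟨X, hX, Y, hY, hnot, c, hc, rfl⟩
        · exact mem_Ai_succ_of_mem ((ih3 V (Ai_subset_circuits hV)).1 hV) hVB hB𝒞
        · have hXc := Ai_subset_circuits hX
          have hYc := Ai_subset_circuits hY
          have hX' := (ih3 X hXc).1 hX
          have hY' := (ih3 Y hYc).1 hY
          have hnot' : X ∩ Y ∉ Ai (M₁.disjointSum M₂ h) i := fun hmem =>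
            hnot ((ih3 (X ∩ Y) (inter_subset_left.trans hXc)).2 hmem)
          exact mem_Ai_succ_of_eps (Or.inr ⟨X, hX', Y, hY', hnot', c, hc, rfl⟩) hVB hB𝒞
      · rintro ⟨-, V, hV, hVB⟩
        rcases hV with hV | ⟨B₁, hB₁, B₂, hB₂, hnot, c, hc, rfl⟩
        · exact mem_Ai_succ_of_mem ((ih3 V (hVB.trans hBc)).2 hV) hVB hBc
        · by_cases hc2 : c ∈ circuits M₂
          · have hunion : B₁ ∪ B₂ ⊆ circuits M₂ := by
              intro T hT
              by_cases hTc : T = c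
              · exact hTc ▸ hc2
              · exact (hVB.trans hBc) ⟨hT, fun hmem => hTc (mem_singleton_iff.1 hmem)⟩
            have hB₁' := (ih3 B₁ (subset_union_left.trans hunion)).2 hB₁
            have hB₂' := (ih3 B₂ (subset_union_right.trans hunion)).2 hB₂
            have hnot' : B₁ ∩ B₂ ∉ Ai M₂ i := fun hmem =>
              hnot ((ih3 (B₁ ∩ B₂)
                (inter_subset_left.trans (subset_union_left.trans hunion))).1 hmem)
            exact ⟨hBc, _, Or.inr ⟨B₁, hB₁', B₂, hB₂', hnot', c, hc, rfl⟩, hVB⟩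
          · rcases ih1 B₁ hB₁ with hcomp | hcomp
            · exfalso
              refine Ai_not_subset_singleton hE₁ i (B₁ ∩ circuits M₁) c hcomp ?_
              intro T hT
              by_contra hTc
              have hTV : T ∈ (B₁ ∪ B₂) \ {c} := ⟨Or.inl hT.1, hTc⟩
              exact circuits_not_both h hT.2 (hVB.trans hBc hTV)
            · refine mem_Ai_succ_of_mem hcomp ?_ hBc
              intro T hT
              exact hVB ⟨Or.inl hT.1, fun hmem => hc2 (mem_singleton_iff.1 hmem ▸ hT.2)⟩
    refine ⟨?_, P2L, P2R⟩
    rintro A ⟨hA𝒞, V, hV, hVA⟩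
    rcases hV with hV | ⟨B₁, hB₁, B₂, hB₂, hnot, c, hcmem, rfl⟩
    · rcases ih1 V hV with hcomp | hcomp
      · exact Or.inl (mem_Ai_succ_of_mem hcomp
          (inter_subset_inter_left _ hVA) inter_subset_right)
      · exact Or.inr (mem_Ai_succ_of_mem hcomp
          (inter_subset_inter_left _ hVA) inter_subset_right)
    · have hB₁𝒞 := Ai_subset_circuits hB₁
      have hB₂𝒞 := Ai_subset_circuits hB₂
      have hc𝒞 : c ∈ circuits (M₁.disjointSum M₂ h) := hB₁𝒞 hcmem.1
      rw [circuits_disjointSum] at hc𝒞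
      rcases hc𝒞 with hc1 | hc2
      · -- c is a circuit of M₁
        by_cases hS₁ : B₁ ∩ circuits M₂ ∈ Ai M₂ i
        · refine Or.inr (mem_Ai_succ_of_mem hS₁ ?_ inter_subset_right)
          intro T hT
          exact ⟨hVA ⟨Or.inl hT.1, fun hmem =>
            circuits_not_both h hc1 (mem_singleton_iff.1 hmem ▸ hT.2)⟩, hT.2⟩
        by_cases hS₂ : B₂ ∩ circuits M₂ ∈ Ai M₂ i
        · refine Or.inr (mem_Ai_succ_of_mem hS₂ ?_ inter_subset_right)
          intro T hT
          exact ⟨hVA ⟨Or.inr hT.1, fun hmem =>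
            circuits_not_both h hc1 (mem_singleton_iff.1 hmem ▸ hT.2)⟩, hT.2⟩
        have hX : B₁ ∩ circuits M₁ ∈ Ai M₁ i := (ih1 B₁ hB₁).resolve_right hS₁
        have hY : B₂ ∩ circuits M₁ ∈ Ai M₁ i := (ih1 B₂ hB₂).resolve_right hS₂
        have hcX : c ∈ B₁ ∩ circuits M₁ := ⟨hcmem.1, hc1⟩
        have hcY : c ∈ B₂ ∩ circuits M₁ := ⟨hcmem.2, hc1⟩
        have hfiresub : ((B₁ ∩ circuits M₁) ∪ (B₂ ∩ circuits M₁)) \ {c}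
            ⊆ A ∩ circuits M₁ := by
          rintro T ⟨hT1, hT2⟩
          rcases hT1 with hT | hT
          · exact ⟨hVA ⟨Or.inl hT.1, hT2⟩, hT.2⟩
          · exact ⟨hVA ⟨Or.inr hT.1, hT2⟩, hT.2⟩
        have hinter1 : (B₁ ∩ circuits M₁) ∩ (B₂ ∩ circuits M₁)
            = (B₁ ∩ B₂) ∩ circuits M₁ := by
          ext T; simp only [mem_inter_iff]; tauto
        cases i with
        | zero =>
          by_cases hXY : (B₁ ∩ circuits M₁) ∩ (B₂ ∩ circuits M₁) ∈ Ai M₁ 0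
          · -- intersection dependent at level 0: surplus analysis
            have hX0 : B₁ ∩ circuits M₁ ∈ A0 M₁ := hX
            have hY0 : B₂ ∩ circuits M₁ ∈ A0 M₁ := hY
            have hXY0 : (B₁ ∩ circuits M₁) ∩ (B₂ ∩ circuits M₁) ∈ A0 M₁ := hXY
            by_cases hX2 : nullity M₁ (supp (B₁ ∩ circuits M₁)) + 2
                ≤ (B₁ ∩ circuits M₁).ncard
            · refine Or.inl (mem_Ai_succ_of_mem
                (?_ : (B₁ ∩ circuits M₁) \ {c} ∈ Ai M₁ 0) ?_ inter_subset_right)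
              · refine ⟨diff_subset.trans inter_subset_right, ?_⟩
                have hmono : nullity M₁ (supp ((B₁ ∩ circuits M₁) \ {c}))
                    ≤ nullity M₁ (supp (B₁ ∩ circuits M₁)) :=
                  nullity_mono (hE₁.subset (supp_subset_ground inter_subset_right))
                    (supp_mono diff_subset)
                have hcard : ((B₁ ∩ circuits M₁) \ {c}).ncard
                    = (B₁ ∩ circuits M₁).ncard - 1 :=
                  Set.ncard_diff_singleton_of_mem hcX
                have hpos : 1 ≤ (B₁ ∩ circuits M₁).ncard := by
                  have := hX0.2; omega
                omega
              · rintro T ⟨hT1, hT2⟩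
                exact ⟨hVA ⟨Or.inl hT1.1, hT2⟩, hT1.2⟩
            by_cases hY2 : nullity M₁ (supp (B₂ ∩ circuits M₁)) + 2
                ≤ (B₂ ∩ circuits M₁).ncard
            · refine Or.inl (mem_Ai_succ_of_mem
                (?_ : (B₂ ∩ circuits M₁) \ {c} ∈ Ai M₁ 0) ?_ inter_subset_right)
              · refine ⟨diff_subset.trans inter_subset_right, ?_⟩
                have hmono : nullity M₁ (supp ((B₂ ∩ circuits M₁) \ {c}))
                    ≤ nullity M₁ (supp (B₂ ∩ circuits M₁)) :=
                  nullity_mono (hE₁.subset (supp_subset_ground inter_subset_right))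
                    (supp_mono diff_subset)
                have hcard : ((B₂ ∩ circuits M₁) \ {c}).ncard
                    = (B₂ ∩ circuits M₁).ncard - 1 :=
                  Set.ncard_diff_singleton_of_mem hcY
                omega
              · rintro T ⟨hT1, hT2⟩
                exact ⟨hVA ⟨Or.inr hT1.1, hT2⟩, hT1.2⟩
            -- psi branch
            right
            obtain ⟨hs₁n, hs₁c⟩ := family_split hE₁ hE₂ hB₁𝒞
            obtain ⟨hs₂n, hs₂c⟩ := family_split hE₁ hE₂ hB₂𝒞
            have hBBc : B₁ ∩ B₂ ⊆ circuits (M₁.disjointSum M₂ h) :=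
              inter_subset_left.trans hB₁𝒞
            obtain ⟨hsBBn, hsBBc⟩ := family_split hE₁ hE₂ hBBc
            have hB₁0 : B₁ ∈ A0 (M₁.disjointSum M₂ h) := hB₁
            have hB₂0 : B₂ ∈ A0 (M₁.disjointSum M₂ h) := hB₂
            have hcount₁ := hB₁0.2
            have hcount₂ := hB₂0.2
            have hnotBB : ¬ nullity (M₁.disjointSum M₂ h) (supp (B₁ ∩ B₂))
                < (B₁ ∩ B₂).ncard := fun hlt => hnot ⟨hBBc, hlt⟩
            have hXcount := hX0.2
            have hYcount := hY0.2
            have hXYcount : nullity M₁ (supp ((B₁ ∩ B₂) ∩ circuits M₁))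
                < ((B₁ ∩ B₂) ∩ circuits M₁).ncard := by
              rw [← hinter1]; exact hXY0.2
            have hinter2 : (B₁ ∩ circuits M₂) ∩ (B₂ ∩ circuits M₂)
                = (B₁ ∩ B₂) ∩ circuits M₂ := by
              ext T; simp only [mem_inter_iff]; tauto
            have hσ₁ : nullity M₂ (supp (B₁ ∩ circuits M₂)) ≤ (B₁ ∩ circuits M₂).ncard := by
              omega
            have hσ₂ : nullity M₂ (supp (B₂ ∩ circuits M₂)) ≤ (B₂ ∩ circuits M₂).ncard := by
              omega
            have hdef : ((B₁ ∩ circuits M₂) ∩ (B₂ ∩ circuits M₂)).ncard + 1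
                ≤ nullity M₂ (supp ((B₁ ∩ circuits M₂) ∩ (B₂ ∩ circuits M₂))) := by
              rw [hinter2]; omega
            obtain ⟨V', hV', hV'sub⟩ :=
              psi hE₂ inter_subset_right inter_subset_right hσ₁ hσ₂ hdef
            refine mem_Ai_succ_of_eps (show V' ∈ eps (Ai M₂ 0) from hV')
              (hV'sub.trans ?_) inter_subset_right
            rintro T (hT | hT)
            · exact ⟨hVA ⟨Or.inl hT.1, fun hmem =>
                circuits_not_both h hc1 (mem_singleton_iff.1 hmem ▸ hT.2)⟩, hT.2⟩
            · exact ⟨hVA ⟨Or.inr hT.1, fun hmem =>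
                circuits_not_both h hc1 (mem_singleton_iff.1 hmem ▸ hT.2)⟩, hT.2⟩
          · exact Or.inl (mem_Ai_succ_of_eps
              (Or.inr ⟨_, hX, _, hY, hXY, c, ⟨hcX, hcY⟩, rfl⟩) hfiresub inter_subset_right)
        | succ j =>
          have hnot' : (B₁ ∩ circuits M₁) ∩ (B₂ ∩ circuits M₁) ∉ Ai M₁ (j+1) := by
            intro hmem
            rw [hinter1] at hmem
            have hmem' := (ih2 ((B₁ ∩ B₂) ∩ circuits M₁) inter_subset_right).1 hmem
            exact hnot (Ai_up_closed hmem' inter_subset_left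
              (inter_subset_left.trans hB₁𝒞))
          exact Or.inl (mem_Ai_succ_of_eps
            (Or.inr ⟨_, hX, _, hY, hnot', c, ⟨hcX, hcY⟩, rfl⟩) hfiresub inter_subset_right)
      · -- c is a circuit of M₂ (mirror image)
        by_cases hS₁ : B₁ ∩ circuits M₁ ∈ Ai M₁ i
        · refine Or.inl (mem_Ai_succ_of_mem hS₁ ?_ inter_subset_right)
          intro T hT
          exact ⟨hVA ⟨Or.inl hT.1, fun hmem =>
            circuits_not_both h (mem_singleton_iff.1 hmem ▸ hT.2) hc2⟩, hT.2⟩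
        by_cases hS₂ : B₂ ∩ circuits M₁ ∈ Ai M₁ i
        · refine Or.inl (mem_Ai_succ_of_mem hS₂ ?_ inter_subset_right)
          intro T hT
          exact ⟨hVA ⟨Or.inr hT.1, fun hmem =>
            circuits_not_both h (mem_singleton_iff.1 hmem ▸ hT.2) hc2⟩, hT.2⟩
        have hX : B₁ ∩ circuits M₂ ∈ Ai M₂ i := (ih1 B₁ hB₁).resolve_left hS₁
        have hY : B₂ ∩ circuits M₂ ∈ Ai M₂ i := (ih1 B₂ hB₂).resolve_left hS₂
        have hcX : c ∈ B₁ ∩ circuits M₂ := ⟨hcmem.1, hc2⟩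
        have hcY : c ∈ B₂ ∩ circuits M₂ := ⟨hcmem.2, hc2⟩
        have hfiresub : ((B₁ ∩ circuits M₂) ∪ (B₂ ∩ circuits M₂)) \ {c}
            ⊆ A ∩ circuits M₂ := by
          rintro T ⟨hT1, hT2⟩
          rcases hT1 with hT | hT
          · exact ⟨hVA ⟨Or.inl hT.1, hT2⟩, hT.2⟩
          · exact ⟨hVA ⟨Or.inr hT.1, hT2⟩, hT.2⟩
        have hinter1 : (B₁ ∩ circuits M₂) ∩ (B₂ ∩ circuits M₂)
            = (B₁ ∩ B₂) ∩ circuits M₂ := by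
          ext T; simp only [mem_inter_iff]; tauto
        cases i with
        | zero =>
          by_cases hXY : (B₁ ∩ circuits M₂) ∩ (B₂ ∩ circuits M₂) ∈ Ai M₂ 0
          · have hX0 : B₁ ∩ circuits M₂ ∈ A0 M₂ := hX
            have hY0 : B₂ ∩ circuits M₂ ∈ A0 M₂ := hY
            have hXY0 : (B₁ ∩ circuits M₂) ∩ (B₂ ∩ circuits M₂) ∈ A0 M₂ := hXY
            by_cases hX2 : nullity M₂ (supp (B₁ ∩ circuits M₂)) + 2
                ≤ (B₁ ∩ circuits M₂).ncard
            · refine Or.inr (mem_Ai_succ_of_mem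
                (?_ : (B₁ ∩ circuits M₂) \ {c} ∈ Ai M₂ 0) ?_ inter_subset_right)
              · refine ⟨diff_subset.trans inter_subset_right, ?_⟩
                have hmono : nullity M₂ (supp ((B₁ ∩ circuits M₂) \ {c}))
                    ≤ nullity M₂ (supp (B₁ ∩ circuits M₂)) :=
                  nullity_mono (hE₂.subset (supp_subset_ground inter_subset_right))
                    (supp_mono diff_subset)
                have hcard : ((B₁ ∩ circuits M₂) \ {c}).ncard
                    = (B₁ ∩ circuits M₂).ncard - 1 :=
                  Set.ncard_diff_singleton_of_mem hcX
                omega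
              · rintro T ⟨hT1, hT2⟩
                exact ⟨hVA ⟨Or.inl hT1.1, hT2⟩, hT1.2⟩
            by_cases hY2 : nullity M₂ (supp (B₂ ∩ circuits M₂)) + 2
                ≤ (B₂ ∩ circuits M₂).ncard
            · refine Or.inr (mem_Ai_succ_of_mem
                (?_ : (B₂ ∩ circuits M₂) \ {c} ∈ Ai M₂ 0) ?_ inter_subset_right)
              · refine ⟨diff_subset.trans inter_subset_right, ?_⟩
                have hmono : nullity M₂ (supp ((B₂ ∩ circuits M₂) \ {c}))
                    ≤ nullity M₂ (supp (B₂ ∩ circuits M₂)) :=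
                  nullity_mono (hE₂.subset (supp_subset_ground inter_subset_right))
                    (supp_mono diff_subset)
                have hcard : ((B₂ ∩ circuits M₂) \ {c}).ncard
                    = (B₂ ∩ circuits M₂).ncard - 1 :=
                  Set.ncard_diff_singleton_of_mem hcY
                omega
              · rintro T ⟨hT1, hT2⟩
                exact ⟨hVA ⟨Or.inr hT1.1, hT2⟩, hT1.2⟩
            left
            obtain ⟨hs₁n, hs₁c⟩ := family_split hE₁ hE₂ hB₁𝒞
            obtain ⟨hs₂n, hs₂c⟩ := family_split hE₁ hE₂ hB₂𝒞
            have hBBc : B₁ ∩ B₂ ⊆ circuits (M₁.disjointSum M₂ h) :=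
              inter_subset_left.trans hB₁𝒞
            obtain ⟨hsBBn, hsBBc⟩ := family_split hE₁ hE₂ hBBc
            have hB₁0 : B₁ ∈ A0 (M₁.disjointSum M₂ h) := hB₁
            have hB₂0 : B₂ ∈ A0 (M₁.disjointSum M₂ h) := hB₂
            have hcount₁ := hB₁0.2
            have hcount₂ := hB₂0.2
            have hnotBB : ¬ nullity (M₁.disjointSum M₂ h) (supp (B₁ ∩ B₂))
                < (B₁ ∩ B₂).ncard := fun hlt => hnot ⟨hBBc, hlt⟩
            have hXcount := hX0.2
            have hYcount := hY0.2
            have hXYcount : nullity M₂ (supp ((B₁ ∩ B₂) ∩ circuits M₂))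
                < ((B₁ ∩ B₂) ∩ circuits M₂).ncard := by
              rw [← hinter1]; exact hXY0.2
            have hinter2 : (B₁ ∩ circuits M₁) ∩ (B₂ ∩ circuits M₁)
                = (B₁ ∩ B₂) ∩ circuits M₁ := by
              ext T; simp only [mem_inter_iff]; tauto
            have hσ₁ : nullity M₁ (supp (B₁ ∩ circuits M₁)) ≤ (B₁ ∩ circuits M₁).ncard := by
              omega
            have hσ₂ : nullity M₁ (supp (B₂ ∩ circuits M₁)) ≤ (B₂ ∩ circuits M₁).ncard := by
              omega
            have hdef : ((B₁ ∩ circuits M₁) ∩ (B₂ ∩ circuits M₁)).ncard + 1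
                ≤ nullity M₁ (supp ((B₁ ∩ circuits M₁) ∩ (B₂ ∩ circuits M₁))) := by
              rw [hinter2]; omega
            obtain ⟨V', hV', hV'sub⟩ :=
              psi hE₁ inter_subset_right inter_subset_right hσ₁ hσ₂ hdef
            refine mem_Ai_succ_of_eps (show V' ∈ eps (Ai M₁ 0) from hV')
              (hV'sub.trans ?_) inter_subset_right
            rintro T (hT | hT)
            · exact ⟨hVA ⟨Or.inl hT.1, fun hmem =>
                circuits_not_both h (mem_singleton_iff.1 hmem ▸ hT.2) hc2⟩, hT.2⟩
            · exact ⟨hVA ⟨Or.inr hT.1, fun hmem =>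
                circuits_not_both h (mem_singleton_iff.1 hmem ▸ hT.2) hc2⟩, hT.2⟩
          · exact Or.inr (mem_Ai_succ_of_eps
              (Or.inr ⟨_, hX, _, hY, hXY, c, ⟨hcX, hcY⟩, rfl⟩) hfiresub inter_subset_right)
        | succ j =>
          have hnot' : (B₁ ∩ circuits M₂) ∩ (B₂ ∩ circuits M₂) ∉ Ai M₂ (j+1) := by
            intro hmem
            rw [hinter1] at hmem
            have hmem' := (ih3 ((B₁ ∩ B₂) ∩ circuits M₂) inter_subset_right).1 hmem
            exact hnot (Ai_up_closed hmem' inter_subset_left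
              (inter_subset_left.trans hB₁𝒞))
          exact Or.inr (mem_Ai_succ_of_eps
            (Or.inr ⟨_, hX, _, hY, hnot', c, ⟨hcX, hcY⟩, rfl⟩) hfiresub inter_subset_right)

end Main

/-- δ(M₁ ⊕ M₂) = δ(M₁) ⊕ δ(M₂): a family of circuits of the direct sum
is dependent iff its intersection with one of the two circuit collections is dependent
in the corresponding derived matroid. -/
theorem derived_disjointSum (M₁ M₂ : Matroid α) (h : Disjoint M₁.E M₂.E)
    (hE₁ : M₁.E.Finite) (hE₂ : M₂.E.Finite) :
    derivedDep (M₁.disjointSum M₂ h) =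
      {A : Set (Set α) | A ⊆ circuits (M₁.disjointSum M₂ h) ∧
        (A ∩ circuits M₁ ∈ derivedDep M₁ ∨ A ∩ circuits M₂ ∈ derivedDep M₂)} := by
  ext A
  simp only [derivedDep, mem_iUnion, mem_setOf_eq]
  constructor
  · rintro ⟨i, hA⟩
    have hA𝒞 : A ⊆ circuits (M₁.disjointSum M₂ h) := Ai_subset_circuits hA
    rcases (main_induction hE₁ hE₂ i).1 A hA with hc | hc
    · exact ⟨hA𝒞, Or.inl ⟨i, hc⟩⟩
    · exact ⟨hA𝒞, Or.inr ⟨i, hc⟩⟩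
  · rintro ⟨hA𝒞, (⟨i, hi⟩ | ⟨i, hi⟩)⟩
    · have hmem := ((main_induction (h := h) hE₁ hE₂ i).2.1 (A ∩ circuits M₁)
        inter_subset_right).1 hi
      exact ⟨i + 1, mem_Ai_succ_of_mem hmem inter_subset_left hA𝒞⟩
    · have hmem := ((main_induction (h := h) hE₁ hE₂ i).2.2 (A ∩ circuits M₂)
        inter_subset_right).1 hi
      exact ⟨i + 1, mem_Ai_succ_of_mem hmem inter_subset_left hA𝒞⟩

end DM
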